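/- arXiv:0903.4571 — 3 statements merged into one kernel-verified Lean document; each statement's English description precedes it below -/
import Mathlib

section
/- If S is symmetric positive definite, then for every τ in the upper half plane 𝔥 the bilinear form H(α, β) := E(α, β·J_τ⁻¹) = E(α, −β·J_τ) on M_{g×2}(ℝ) is symmetric and positive definite (the Riemann positivity condition for the polarized complex torus ℂ^g/Λ_τ). -/
open Matrix

/-- The real `2×2` matrix `J₂ = [[0,1],[−1,0]]`. -/
def J2 : Matrix (Fin 2) (Fin 2) ℝ := !![0, 1; -1, 0]

/-- The bilinear form `E(α,β) = tr(αᵗ·S·β·J₂)` on the space of real `g×2` matrices. -/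
def Eform {g : ℕ} (S : Matrix (Fin g) (Fin g) ℝ) (α β : Matrix (Fin g) (Fin 2) ℝ) : ℝ :=
  (αᵀ * S * β * J2).trace

/-- For `τ` in the upper half plane (with `x = Re τ`, `y = Im τ`), the real `2×2` matrix
`J_τ = (1/y) · [[−x, x²+y²],[−1, x]]`; note `J_τ⁻¹ = −J_τ`. -/
noncomputable def Jmat (τ : ℂ) : Matrix (Fin 2) (Fin 2) ℝ :=
  (τ.im)⁻¹ • !![-τ.re, τ.re ^ 2 + τ.im ^ 2; -1, τ.re]

lemma Jmat_inv (τ : ℂ) (hτ : 0 < τ.im) : (Jmat τ)⁻¹ = -Jmat τ := by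
  have hy : τ.im ≠ 0 := hτ.ne'
  apply inv_eq_right_inv
  ext i j
  fin_cases i <;> fin_cases j <;>
    simp [Jmat, Matrix.mul_apply, Fin.sum_univ_two, Matrix.one_apply] <;> field_simp <;> ring

lemma transpose_L (τ : ℂ) : (!![τ.re, 1; τ.im, 0] : Matrix (Fin 2) (Fin 2) ℝ)ᵀ
    = !![τ.re, τ.im; 1, 0] := by
  ext i j; fin_cases i <;> fin_cases j <;> simp

lemma Jmat_inv_mul_J2 (τ : ℂ) (hτ : 0 < τ.im) :
    (Jmat τ)⁻¹ * J2 = (τ.im)⁻¹ • (!![τ.re, 1; τ.im, 0]ᵀ * !![τ.re, 1; τ.im, 0]) := by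
  rw [Jmat_inv τ hτ, transpose_L]
  ext i j
  fin_cases i <;> fin_cases j <;>
    simp [Jmat, J2, Matrix.mul_apply, Fin.sum_univ_two] <;> exact Or.inl (by ring)

/-- If `S` is symmetric positive definite, then for every `τ ∈ 𝔥` the bilinear form
`H(α,β) := E(α, β·J_τ⁻¹)` on `M_{g×2}(ℝ)` is symmetric and positive definite
(the Riemann positivity condition for the polarized complex torus `ℂ^g/Λ_τ`). -/
theorem stmt_7 {g : ℕ} (hg : 1 ≤ g) (S : Matrix (Fin g) (Fin g) ℝ) (hS : S.PosDef)
    (τ : ℂ) (hτ : 0 < τ.im) :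
    (∀ α β : Matrix (Fin g) (Fin 2) ℝ,
      Eform S α (β * (Jmat τ)⁻¹) = Eform S β (α * (Jmat τ)⁻¹)) ∧
    (∀ α : Matrix (Fin g) (Fin 2) ℝ, α ≠ 0 → 0 < Eform S α (α * (Jmat τ)⁻¹)) := by
  have hy : (0:ℝ) < τ.im := hτ
  set x := τ.re with hx
  set L : Matrix (Fin 2) (Fin 2) ℝ := !![τ.re, 1; τ.im, 0] with hL
  have hP : ∀ α β : Matrix (Fin g) (Fin 2) ℝ,
      Eform S α (β * (Jmat τ)⁻¹) = (τ.im)⁻¹ * (αᵀ * S * β * (Lᵀ * L)).trace := by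
    intro α β
    have : αᵀ * S * (β * (Jmat τ)⁻¹) * J2 = αᵀ * S * β * ((Jmat τ)⁻¹ * J2) := by
      simp only [Matrix.mul_assoc]
    rw [Eform, this, Jmat_inv_mul_J2 τ hτ, Matrix.mul_smul, Matrix.trace_smul, smul_eq_mul]
  have hSt : Sᵀ = S := hS.1
  have hsym : ∀ α β : Matrix (Fin g) (Fin 2) ℝ,
      Eform S α (β * (Jmat τ)⁻¹) = Eform S β (α * (Jmat τ)⁻¹) := by
    intro α β
    rw [hP, hP]
    congr 1
    have h1 : (αᵀ * S * β * (Lᵀ * L)).trace = ((αᵀ * S * β * (Lᵀ * L))ᵀ).trace :=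
      (Matrix.trace_transpose _).symm
    rw [h1]
    have h2 : (αᵀ * S * β * (Lᵀ * L))ᵀ = (Lᵀ * L) * (βᵀ * S * α) := by
      simp only [Matrix.transpose_mul, Matrix.transpose_transpose, hSt, Matrix.mul_assoc]
    rw [h2, Matrix.trace_mul_comm]
  refine ⟨hsym, fun α hα => ?_⟩
  rw [hP]
  have hdetL : L.det = -τ.im := by simp [hL, Matrix.det_fin_two_of]
  have hdetLt : IsUnit (Lᵀ).det := by
    rw [Matrix.det_transpose, hdetL]
    exact (neg_ne_zero.mpr hy.ne').isUnit
  set γ : Matrix (Fin g) (Fin 2) ℝ := α * Lᵀ with hγdef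
  have hγ : γ ≠ 0 := by
    intro h0
    apply hα
    have := congrArg (fun M => M * (Lᵀ)⁻¹) h0
    simpa [hγdef, Matrix.mul_assoc, Matrix.mul_nonsing_inv _ hdetLt] using this
  have htr : αᵀ * S * α * (Lᵀ * L) = (αᵀ * S * α * Lᵀ) * L := by
    simp only [Matrix.mul_assoc]
  have htr2 : ((αᵀ * S * α * Lᵀ) * L).trace = (γᵀ * S * γ).trace := by
    rw [Matrix.trace_mul_comm]
    congr 1
    simp only [hγdef, Matrix.transpose_mul, Matrix.transpose_transpose, Matrix.mul_assoc]
  rw [htr, htr2]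
  have hdiag : ∀ i, (γᵀ * S * γ) i i = star (γᵀ i) ⬝ᵥ S *ᵥ (γᵀ i) := by
    intro i
    simp only [Matrix.mul_apply, Matrix.mulVec, dotProduct, Matrix.transpose_apply,
      star_trivial, Finset.sum_mul, Finset.mul_sum]
    rw [Finset.sum_comm]
    exact Finset.sum_congr rfl fun k _ => Finset.sum_congr rfl fun j _ => by ring
  have hpos : 0 < (γᵀ * S * γ).trace := by
    obtain ⟨k, j, hk⟩ : ∃ k j, γ k j ≠ 0 := by
      by_contra h
      push_neg at h
      exact hγ (Matrix.ext fun k j => h k j)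
    have hcol : γᵀ j ≠ 0 := fun h0 => hk (congrFun h0 k)
    rw [Matrix.trace]
    apply Finset.sum_pos'
    · intro i _
      rw [Matrix.diag, hdiag i]
      exact (hS.posSemidef).dotProduct_mulVec_nonneg (γᵀ i)
    · exact ⟨j, Finset.mem_univ j, by rw [Matrix.diag, hdiag j]; exact hS.dotProduct_mulVec_pos hcol⟩
  exact mul_pos (inv_pos.mpr hy) hpos
end

section
/- For all γ, γ' ∈ Γ, all λ, λ' ∈ M_{g×2}(ℝ), and all (z, τ) ∈ ℂ^g × 𝔥, one has act(γ,λ)(act(γ',λ')(z,τ)) = act(γ·γ', λ' + ρ(γ')⁻¹·λ·γ')(z,τ); i.e. the maps act(γ,λ) define a group action of the semidirect product M_{g×2}(ℝ) ⋊ Γ on ℂ^g × 𝔥. -/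
open Matrix

/-- The underlying `2×2` real matrix of an element of `SL₂(ℝ)`. -/
def SLmat (γ : Matrix.SpecialLinearGroup (Fin 2) ℝ) : Matrix (Fin 2) (Fin 2) ℝ := γ

/-- The underlying matrix of an element of `GL_g(ℝ)`. -/
def GLmat {g : ℕ} (A : GL (Fin g) ℝ) : Matrix (Fin g) (Fin g) ℝ := A

/-- The Möbius transform `γ·τ = (aτ+b)/(cτ+d)` of `τ` by the real matrix
`γ = [[a,b],[c,d]]`. -/
noncomputable def moebius (γ : Matrix (Fin 2) (Fin 2) ℝ) (τ : ℂ) : ℂ :=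
  ((γ 0 0 : ℂ) * τ + (γ 0 1 : ℂ)) / ((γ 1 0 : ℂ) * τ + (γ 1 1 : ℂ))

/-- The map `act(γ,λ)(z,τ) = ((1/(cτ+d))·ρ(γ)·(z + λ·(τ,1)ᵗ), γ·τ)` on `ℂ^g × 𝔥`
(here `R = ρ(γ)`). -/
noncomputable def act {g : ℕ} (γ : Matrix (Fin 2) (Fin 2) ℝ)
    (R : Matrix (Fin g) (Fin g) ℝ) (l : Matrix (Fin g) (Fin 2) ℝ)
    (p : (Fin g → ℂ) × ℂ) : (Fin g → ℂ) × ℂ :=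
  (((γ 1 0 : ℂ) * p.2 + (γ 1 1 : ℂ))⁻¹ •
      (R.map ((↑) : ℝ → ℂ) *ᵥ (p.1 + l.map ((↑) : ℝ → ℂ) *ᵥ ![p.2, 1])),
    moebius γ p.2)

private lemma mapC_mul {n m p : Type*} [Fintype m] (M : Matrix n m ℝ) (N : Matrix m p ℝ) :
    (M * N).map ((↑) : ℝ → ℂ) = M.map ((↑) : ℝ → ℂ) * N.map ((↑) : ℝ → ℂ) :=
  Matrix.map_mul (f := Complex.ofRealHom)

private lemma mapC_add {n m : Type*} (M N : Matrix n m ℝ) :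
    (M + N).map ((↑) : ℝ → ℂ) = M.map ((↑) : ℝ → ℂ) + N.map ((↑) : ℝ → ℂ) := by
  ext i j
  simp [Matrix.map_apply]

private lemma den_ne_zero' (M : Matrix (Fin 2) (Fin 2) ℝ) (hdet : M.det = 1)
    (τ : ℂ) (hτ : 0 < τ.im) : (M 1 0 : ℂ) * τ + (M 1 1 : ℂ) ≠ 0 := by
  intro h
  have him := congrArg Complex.im h
  simp [Complex.add_im, Complex.mul_im] at him
  have hc : M 1 0 = 0 := him.resolve_right (ne_of_gt hτ)
  have hd : M 1 1 = 0 := by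
    rw [hc] at h
    simpa using h
  simp [Matrix.det_fin_two, hc, hd] at hdet

private lemma vec_eq' (M : Matrix (Fin 2) (Fin 2) ℝ) (τ : ℂ)
    (h : (M 1 0 : ℂ) * τ + M 1 1 ≠ 0) :
    ![moebius M τ, (1:ℂ)] =
      ((M 1 0 : ℂ) * τ + M 1 1)⁻¹ • (M.map ((↑) : ℝ → ℂ) *ᵥ ![τ, 1]) := by
  funext i
  fin_cases i <;>
    simp [moebius, Matrix.mulVec, dotProduct, Fin.sum_univ_two, Matrix.map_apply,
      Pi.smul_apply, smul_eq_mul] <;> field_simp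

private lemma den_cocycle' (A B : Matrix (Fin 2) (Fin 2) ℝ) (τ : ℂ)
    (hB : (B 1 0 : ℂ) * τ + B 1 1 ≠ 0) :
    ((A * B) 1 0 : ℂ) * τ + (A * B) 1 1 =
      ((A 1 0 : ℂ) * moebius B τ + A 1 1) * ((B 1 0 : ℂ) * τ + B 1 1) := by
  simp only [moebius, Matrix.mul_apply, Fin.sum_univ_two]
  push_cast
  field_simp
  ring

private lemma moebius_mul' (A B : Matrix (Fin 2) (Fin 2) ℝ) (τ : ℂ)
    (hB : (B 1 0 : ℂ) * τ + B 1 1 ≠ 0)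
    (hAB : ((A*B) 1 0 : ℂ) * τ + (A*B) 1 1 ≠ 0) :
    moebius A (moebius B τ) = moebius (A * B) τ := by
  have hA : (A 1 0 : ℂ) * moebius B τ + A 1 1 ≠ 0 := by
    intro h0
    exact hAB (by rw [den_cocycle' A B τ hB, h0, zero_mul])
  unfold moebius at hA ⊢
  rw [div_eq_div_iff hA (by simpa only [Matrix.mul_apply, Fin.sum_univ_two, Complex.ofReal_add,
    Complex.ofReal_mul] using hAB)]
  simp only [Matrix.mul_apply, Fin.sum_univ_two]
  push_cast
  have hq := div_mul_cancel₀ ((B 0 0 : ℂ) * τ + B 0 1) hB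
  linear_combination ((A 0 0 : ℂ) * A 1 1 - A 0 1 * A 1 0) * hq


/-- For all `γ, γ' ∈ Γ`, all real `g×2` matrices `λ, λ'`, and all `(z,τ) ∈ ℂ^g × 𝔥`,
`act(γ,λ)(act(γ',λ')(z,τ)) = act(γ·γ', λ' + ρ(γ')⁻¹·λ·γ')(z,τ)`; i.e. the maps
`act(γ,λ)` define a group action of the semidirect product `M_{g×2}(ℝ) ⋊ Γ` on
`ℂ^g × 𝔥`. -/
theorem stmt_9 {g : ℕ} (hg : 1 ≤ g)
    (Γ : Subgroup (Matrix.SpecialLinearGroup (Fin 2) ℝ))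
    (ρ : Γ →* GL (Fin g) ℝ) :
    ∀ (γ γ' : Γ) (l l' : Matrix (Fin g) (Fin 2) ℝ) (z : Fin g → ℂ) (τ : ℂ),
      0 < τ.im →
      act (SLmat ↑γ) (GLmat (ρ γ)) l (act (SLmat ↑γ') (GLmat (ρ γ')) l' (z, τ)) =
        act (SLmat ↑(γ * γ')) (GLmat (ρ (γ * γ')))
          (l' + GLmat ((ρ γ')⁻¹) * l * SLmat ↑γ') (z, τ) := by
  intro γ γ' l l' z τ hτ
  have hABmat : SLmat ↑(γ * γ') = SLmat ↑γ * SLmat ↑γ' := rfl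
  set A := SLmat (↑γ) with hA_def
  set B := SLmat (↑γ') with hB_def
  have hdetA : A.det = 1 := (γ : Matrix.SpecialLinearGroup (Fin 2) ℝ).2
  have hdetB : B.det = 1 := (γ' : Matrix.SpecialLinearGroup (Fin 2) ℝ).2
  have hdetAB : (A * B).det = 1 := by rw [Matrix.det_mul, hdetA, hdetB, one_mul]
  have hB0 : (B 1 0 : ℂ) * τ + B 1 1 ≠ 0 := den_ne_zero' B hdetB τ hτ
  have hAB0 : ((A * B) 1 0 : ℂ) * τ + (A * B) 1 1 ≠ 0 := den_ne_zero' (A * B) hdetAB τ hτ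
  have hcoc := den_cocycle' A B τ hB0
  set Rm := (GLmat (ρ γ)).map ((↑) : ℝ → ℂ) with hRm
  set Rm' := (GLmat (ρ γ')).map ((↑) : ℝ → ℂ) with hRm'
  set Sm := (GLmat ((ρ γ')⁻¹)).map ((↑) : ℝ → ℂ) with hSm
  set Bm := B.map ((↑) : ℝ → ℂ) with hBm
  set Lm := l.map ((↑) : ℝ → ℂ) with hLm
  set Lm' := l'.map ((↑) : ℝ → ℂ) with hLm'
  have hRS : Rm' * Sm = 1 := by
    have h1 : GLmat (ρ γ') * GLmat ((ρ γ')⁻¹) = 1 := by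
      rw [GLmat, GLmat, ← Units.val_mul, mul_inv_cancel]; rfl
    rw [hRm', hSm, ← mapC_mul, h1]
    ext i j
    simp [Matrix.map_apply, Matrix.one_apply, apply_ite]
  have hRmul : (GLmat (ρ (γ * γ'))).map ((↑) : ℝ → ℂ) = Rm * Rm' := by
    rw [_root_.map_mul]
    exact mapC_mul (GLmat (ρ γ)) (GLmat (ρ γ'))
  have hLmap : ((l' + GLmat ((ρ γ')⁻¹) * l * B).map ((↑) : ℝ → ℂ)) = Lm' + Sm * Lm * Bm := by
    rw [mapC_add, mapC_mul, mapC_mul]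
  have h1 : Rm' *ᵥ ((Sm * Lm * Bm) *ᵥ ![τ, 1]) = Lm *ᵥ (Bm *ᵥ ![τ, 1]) := by
    rw [Matrix.mulVec_mulVec, Matrix.mul_assoc Sm Lm Bm, ← Matrix.mul_assoc Rm' Sm (Lm * Bm),
      hRS, Matrix.one_mul, ← Matrix.mulVec_mulVec]
  have key : Rm' *ᵥ (z + (Lm' + Sm * Lm * Bm) *ᵥ ![τ, 1]) =
      Rm' *ᵥ (z + Lm' *ᵥ ![τ, 1]) + Lm *ᵥ (Bm *ᵥ ![τ, 1]) := by
    rw [Matrix.mulVec_add, Matrix.add_mulVec, Matrix.mulVec_add, h1, Matrix.mulVec_add]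
    abel
  simp only [act, hABmat]
  refine Prod.ext ?_ (moebius_mul' A B τ hB0 hAB0)
  show ((A 1 0 : ℂ) * moebius B τ + A 1 1)⁻¹ •
      (Rm *ᵥ ((((B 1 0 : ℂ) * τ + B 1 1)⁻¹ • (Rm' *ᵥ (z + Lm' *ᵥ ![τ, 1]))) +
        Lm *ᵥ ![moebius B τ, 1])) =
    (((A * B) 1 0 : ℂ) * τ + (A * B) 1 1)⁻¹ •
      ((GLmat (ρ (γ * γ'))).map ((↑) : ℝ → ℂ) *ᵥ
        (z + ((l' + GLmat ((ρ γ')⁻¹) * l * B).map ((↑) : ℝ → ℂ)) *ᵥ ![τ, 1]))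
  rw [hRmul, hLmap, vec_eq' B τ hB0, Matrix.mulVec_smul, ← smul_add, Matrix.mulVec_smul,
    smul_smul, ← mul_inv, ← hcoc]
  congr 1
  rw [← Matrix.mulVec_mulVec, key]
end

section
/- Set S := J₂·φ(j) = [[1, 0],[0, −b]]. Then S is symmetric positive definite, and the symplectic form E(α,β) := tr(αᵗ·S·β·J₂) on M₂(ℝ) takes only rational values on the image of B: for all q, r ∈ B one has E(φ(q), φ(r)) = tr(φ(j·q·r̄)) ∈ ℚ, where r̄ denotes the quaternion conjugate of r. -/
open Matrix Quaternion

/-- The ℚ-linear map `φ : B = (a,b | ℚ) → M₂(ℝ)` with `φ(1) = I₂`,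
`φ(i) = [[√a, 0],[0, −√a]]`, `φ(j) = [[0, b],[1, 0]]`,
`φ(k) = [[0, b√a],[−√a, 0]]`. -/
noncomputable def phi (a b : ℚ) (q : ℍ[ℚ, a, b]) : Matrix (Fin 2) (Fin 2) ℝ :=
  (q.re : ℝ) • (1 : Matrix (Fin 2) (Fin 2) ℝ) +
    (q.imI : ℝ) • !![Real.sqrt a, 0; 0, -Real.sqrt a] +
    (q.imJ : ℝ) • !![0, (b : ℝ); 1, 0] +
    (q.imK : ℝ) • !![0, (b : ℝ) * Real.sqrt a; -Real.sqrt a, 0]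

/-- The quaternion `j ∈ B = (a,b | ℚ)`. -/
def quatJ (a b : ℚ) : ℍ[ℚ, a, b] := ⟨0, 0, 1, 0⟩

/-- Set `S := J₂·φ(j) = [[1,0],[0,−b]]`.  Then `S` is symmetric positive definite, and
the symplectic form `E(α,β) = tr(αᵗ·S·β·J₂)` on `M₂(ℝ)` takes only rational values on
the image of `B`: for all `q, r ∈ B` one has `E(φ(q), φ(r)) = tr(φ(j·q·r̄)) ∈ ℚ`,
where `r̄` is the quaternion conjugate of `r`. -/
theorem stmt_17 (a b : ℚ) (ha : 0 < a) (hb : b < 0) :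
    J2 * phi a b (quatJ a b) = !![1, 0; 0, -(b : ℝ)] ∧
    (!![1, 0; 0, -(b : ℝ)] : Matrix (Fin 2) (Fin 2) ℝ).PosDef ∧
    ∀ q r : ℍ[ℚ, a, b],
      ((phi a b q)ᵀ * !![1, 0; 0, -(b : ℝ)] * phi a b r * J2).trace =
        (phi a b (quatJ a b * q * star r)).trace ∧
      ∃ c : ℚ, ((phi a b q)ᵀ * !![1, 0; 0, -(b : ℝ)] * phi a b r * J2).trace = (c : ℝ) := by
  have hsa : Real.sqrt a * Real.sqrt a = (a : ℝ) :=
    Real.mul_self_sqrt (by positivity)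
  refine ⟨?_, ?_, ?_⟩
  · ext i j
    fin_cases i <;> fin_cases j <;>
      simp [J2, phi, quatJ, Matrix.mul_apply, Fin.sum_univ_two]
  · refine Matrix.posDef_iff_dotProduct_mulVec.mpr ⟨?_, ?_⟩
    · ext i j
      fin_cases i <;> fin_cases j <;> simp [Matrix.conjTranspose_apply]
    · intro x hx
      have h01 : x 0 ≠ 0 ∨ x 1 ≠ 0 := by
        by_contra h
        push_neg at h
        exact hx (funext fun i => by fin_cases i <;> simp [h.1, h.2])
      have hb' : (0:ℝ) < -(b:ℝ) := by
        have : (b:ℝ) < 0 := by exact_mod_cast hb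
        linarith
      simp [dotProduct, Matrix.mulVec, Fin.sum_univ_two]
      rcases h01 with h | h
      · nlinarith [mul_self_pos.mpr h, mul_self_nonneg (x 1), mul_nonneg hb'.le (mul_self_nonneg (x 1))]
      · nlinarith [mul_self_pos.mpr h, mul_self_nonneg (x 0), mul_pos hb' (mul_self_pos.mpr h)]
  · intro q r
    have phi_eq : ∀ w : ℍ[ℚ, a, b], phi a b w =
        !![(w.re : ℝ) + w.imI * Real.sqrt a, (w.imJ : ℝ) * b + w.imK * (b * Real.sqrt a);
           (w.imJ : ℝ) - w.imK * Real.sqrt a, (w.re : ℝ) - w.imI * Real.sqrt a] := by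
      intro w
      ext i j
      fin_cases i <;> fin_cases j <;> simp [phi] <;> ring
    have hw : ((quatJ a b * q * star r).re : ℝ) =
        (b : ℝ) * q.imJ * r.re + b * q.imK * (a * r.imI) - b * q.re * r.imJ -
          b * q.imI * (a * r.imK) := by
      simp only [quatJ, QuaternionAlgebra.re_mul, QuaternionAlgebra.imI_mul,
        QuaternionAlgebra.imJ_mul, QuaternionAlgebra.imK_mul, QuaternionAlgebra.re_star,
        QuaternionAlgebra.imI_star, QuaternionAlgebra.imJ_star, QuaternionAlgebra.imK_star]
      push_cast
      ring
    have key : ((phi a b q)ᵀ * !![1, 0; 0, -(b : ℝ)] * phi a b r * J2).trace =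
        (phi a b (quatJ a b * q * star r)).trace := by
      rw [phi_eq, phi_eq, phi_eq]
      rw [show (!![(q.re : ℝ) + q.imI * Real.sqrt a, (q.imJ : ℝ) * b + q.imK * (b * Real.sqrt a);
           (q.imJ : ℝ) - q.imK * Real.sqrt a, (q.re : ℝ) - q.imI * Real.sqrt a])ᵀ =
           !![(q.re : ℝ) + q.imI * Real.sqrt a, (q.imJ : ℝ) - q.imK * Real.sqrt a;
              (q.imJ : ℝ) * b + q.imK * (b * Real.sqrt a), (q.re : ℝ) - q.imI * Real.sqrt a]
         by ext i j; fin_cases i <;> fin_cases j <;> simp]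
      rw [J2, Matrix.mul_fin_two, Matrix.mul_fin_two, Matrix.mul_fin_two]
      rw [Matrix.trace_fin_two_of, Matrix.trace_fin_two_of, hw]
      linear_combination (2 * (b:ℝ) * q.imK * r.imI - 2 * (b:ℝ) * q.imI * r.imK) * hsa
    refine ⟨key, ⟨2 * (quatJ a b * q * star r).re, ?_⟩⟩
    rw [key, phi_eq]
    simp [Matrix.trace_fin_two]
    ring
end
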